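/- arXiv:1604.07127 — 6 statements merged into one kernel-verified Lean document; each statement's English description precedes it below -/
import Mathlib

section
/- Let $(E, \leq, d)$ be a metric space equipped with a partial order, and $P : E \times E \to E$ a map satisfying for all $u, v, w, u_0, u_1 \in E$: (a) $P(u,v) \leq u$ and $P(u,v) \leq v$; (b) $P(u,u) = u$; (c) $P$ is symmetric and associative in the sense that $P(P(u,v),w) = P(u, P(v,w))$ and $P(u,v) = P(v,u)$; (d) contractivity: $d(P(v,u_0), P(v,u_1)) \leq d(u_0, u_1)$. Assume additionally that every monotone decreasing $d$-Cauchy sequence in $E$ converges in $d$, and every monotone increasing $d$-Cauchy sequence in $E$ converges in $d$. Then $(E,d)$ is a complete metric space. -/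
private def vfAux {E : Type*} (P : E → E → E) (u : ℕ → E) (k : ℕ) : ℕ → E
  | 0 => u k
  | l+1 => P (vfAux P u k l) (u (k+l+1))

theorem stmt3 {E : Type*} [MetricSpace E] [PartialOrder E] (P : E → E → E)
    (hPle₁ : ∀ u v : E, P u v ≤ u) (hPle₂ : ∀ u v : E, P u v ≤ v)
    (hPidem : ∀ u : E, P u u = u)
    (hPsymm : ∀ u v : E, P u v = P v u)
    (hPassoc : ∀ u v w : E, P (P u v) w = P u (P v w))
    (hcontr : ∀ v u₀ u₁ : E, dist (P v u₀) (P v u₁) ≤ dist u₀ u₁)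
    (hdec : ∀ u : ℕ → E, Antitone u → CauchySeq u →
      ∃ l, Filter.Tendsto u Filter.atTop (nhds l))
    (hinc : ∀ u : ℕ → E, Monotone u → CauchySeq u →
      ∃ l, Filter.Tendsto u Filter.atTop (nhds l)) :
    CompleteSpace E := by
  apply Metric.complete_of_convergent_controlled_sequences (fun N => (1/2 : ℝ)^N)
    (fun N => by positivity)
  intro u hu
  set v : ℕ → ℕ → E := vfAux P u with hv
  have hv0 : ∀ k, v k 0 = u k := fun k => rfl
  have hvs : ∀ k l, v k (l+1) = P (v k l) (u (k+l+1)) := fun k l => rfl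
  -- identity: left fold equals right fold
  have hid : ∀ l k, v k (l+1) = P (u k) (v (k+1) l) := by
    intro l
    induction l with
    | zero => intro k; rw [hvs, hv0, hv0]
    | succ l ih =>
      intro k
      rw [hvs, ih k, hPassoc, hvs (k+1) l]
      simp only [show k+(l+1)+1 = (k+1)+l+1 from by omega]
  -- step distance bound
  have hstep : ∀ l k, dist (v k (l+1)) (v k l) ≤ dist (u (k+l+1)) (u (k+l)) := by
    intro l
    induction l with
    | zero =>
      intro k
      rw [hvs, hv0]
      calc dist (P (u k) (u (k+0+1))) (u k)
          = dist (P (u k) (u (k+0+1))) (P (u k) (u k)) := by rw [hPidem]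
        _ ≤ dist (u (k+0+1)) (u k) := hcontr _ _ _
        _ = dist (u (k+0+1)) (u (k+0)) := by norm_num
    | succ l ih =>
      intro k
      rw [hid (l+1) k, hid l k]
      calc dist (P (u k) (v (k+1) (l+1))) (P (u k) (v (k+1) l))
          ≤ dist (v (k+1) (l+1)) (v (k+1) l) := hcontr _ _ _
        _ ≤ dist (u (k+1+l+1)) (u (k+1+l)) := ih (k+1)
        _ = dist (u (k+(l+1)+1)) (u (k+(l+1))) := by
            congr 2 <;> omega
  have hstep2 : ∀ k l, dist (v k (l+1)) (v k l) ≤ (1/2 : ℝ)^(k+l) := by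
    intro k l
    exact (hstep l k).trans (le_of_lt (hu (k+l) (k+l+1) (k+l) (by omega) le_rfl))
  -- each v k • is Cauchy and antitone
  have hcauchy : ∀ k, CauchySeq (v k) := by
    intro k
    apply cauchySeq_of_le_geometric (1/2 : ℝ) ((1/2 : ℝ)^k) (by norm_num)
    intro n
    rw [dist_comm]
    calc dist (v k (n+1)) (v k n) ≤ (1/2 : ℝ)^(k+n) := hstep2 k n
      _ = (1/2 : ℝ)^k * (1/2 : ℝ)^n := pow_add _ _ _
  have hanti : ∀ k, Antitone (v k) := by
    intro k
    apply antitone_nat_of_succ_le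
    intro l
    rw [hvs]
    exact hPle₁ _ _
  choose w hw using fun k => hdec (v k) (hanti k) (hcauchy k)
  -- fixpoint identity at finite stage
  have hfix : ∀ k l, P (v k (l+1)) (v (k+1) l) = v k (l+1) := by
    intro k l
    rw [hid l k, hPassoc, hPidem]
  -- P is jointly Lipschitz
  have hPlip : ∀ a b a' b' : E, dist (P a b) (P a' b') ≤ dist a a' + dist b b' := by
    intro a b a' b'
    calc dist (P a b) (P a' b')
        ≤ dist (P a b) (P a b') + dist (P a b') (P a' b') := dist_triangle _ _ _
      _ ≤ dist b b' + dist a a' := by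
          refine add_le_add (hcontr a b b') ?_
          rw [hPsymm a b', hPsymm a' b']
          exact hcontr b' a a'
      _ = dist a a' + dist b b' := add_comm _ _
  -- fixpoint in the limit, hence monotone
  have hfixw : ∀ k, P (w k) (w (k+1)) = w k := by
    intro k
    have h1 : Filter.Tendsto (fun l => v k (l+1)) Filter.atTop (nhds (w k)) :=
      (hw k).comp (Filter.tendsto_add_atTop_nat 1)
    have h2 := hw (k+1)
    have hT : Filter.Tendsto
        (fun l => dist (w k) (v k (l+1)) + dist (w (k+1)) (v (k+1) l)
          + dist (v k (l+1)) (w k)) Filter.atTop (nhds 0) := by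
      have t1 : Filter.Tendsto (fun l => dist (w k) (v k (l+1))) Filter.atTop (nhds 0) := by
        simpa using (tendsto_const_nhds (x := w k)).dist h1
      have t2 : Filter.Tendsto (fun l => dist (w (k+1)) (v (k+1) l)) Filter.atTop (nhds 0) := by
        simpa using (tendsto_const_nhds (x := w (k+1))).dist h2
      have t3 : Filter.Tendsto (fun l => dist (v k (l+1)) (w k)) Filter.atTop (nhds 0) := by
        simpa using h1.dist (tendsto_const_nhds (x := w k))
      simpa using (t1.add t2).add t3
    have hb : ∀ l, dist (P (w k) (w (k+1))) (w k)
        ≤ dist (w k) (v k (l+1)) + dist (w (k+1)) (v (k+1) l) + dist (v k (l+1)) (w k) := by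
      intro l
      calc dist (P (w k) (w (k+1))) (w k)
          ≤ dist (P (w k) (w (k+1))) (P (v k (l+1)) (v (k+1) l))
            + dist (P (v k (l+1)) (v (k+1) l)) (w k) := dist_triangle _ _ _
        _ ≤ (dist (w k) (v k (l+1)) + dist (w (k+1)) (v (k+1) l))
            + dist (v k (l+1)) (w k) := by
              refine add_le_add (hPlip _ _ _ _) ?_
              rw [hfix k l]
        _ = dist (w k) (v k (l+1)) + dist (w (k+1)) (v (k+1) l)
            + dist (v k (l+1)) (w k) := by ring
    have h0 : dist (P (w k) (w (k+1))) (w k) ≤ 0 :=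
      ge_of_tendsto hT (Filter.Eventually.of_forall hb)
    have := le_antisymm h0 dist_nonneg
    exact dist_eq_zero.mp this
  have hwmono : Monotone w := by
    apply monotone_nat_of_le_succ
    intro k
    rw [← hfixw k]
    exact hPle₂ _ _
  -- distance from u k to v k l
  have hdistv : ∀ k l, dist (u k) (v k l) ≤ (1/2 : ℝ)^k * (2 - 2 * (1/2 : ℝ)^l) := by
    intro k l
    induction l with
    | zero => simp [hv0]
    | succ l ih =>
      have h2 : dist (v k l) (v k (l+1)) ≤ (1/2 : ℝ)^(k+l) := by
        rw [dist_comm]; exact hstep2 k l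
      calc dist (u k) (v k (l+1)) ≤ dist (u k) (v k l) + dist (v k l) (v k (l+1)) :=
            dist_triangle _ _ _
        _ ≤ (1/2 : ℝ)^k * (2 - 2 * (1/2 : ℝ)^l) + (1/2 : ℝ)^(k+l) := add_le_add ih h2
        _ = (1/2 : ℝ)^k * (2 - 2 * (1/2 : ℝ)^(l+1)) := by
            rw [pow_add, pow_succ]; ring
  have hdistw : ∀ k, dist (u k) (w k) ≤ 2 * (1/2 : ℝ)^k := by
    intro k
    have hT : Filter.Tendsto (fun l => dist (u k) (v k l)) Filter.atTop
        (nhds (dist (u k) (w k))) := (tendsto_const_nhds (x := u k)).dist (hw k)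
    refine le_of_tendsto hT (Filter.Eventually.of_forall fun l => ?_)
    calc dist (u k) (v k l) ≤ (1/2 : ℝ)^k * (2 - 2 * (1/2 : ℝ)^l) := hdistv k l
      _ ≤ 2 * (1/2 : ℝ)^k := by
          have h1 : (0:ℝ) ≤ (1/2:ℝ)^l := by positivity
          have h2 : (0:ℝ) ≤ (1/2:ℝ)^k := by positivity
          nlinarith
  -- w is Cauchy
  have hwc : CauchySeq w := by
    rw [Metric.cauchySeq_iff]
    intro ε hε
    obtain ⟨N, hN⟩ := exists_pow_lt_of_lt_one (by positivity : (0:ℝ) < ε/5) (by norm_num : (1/2:ℝ) < 1)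
    refine ⟨N, fun m hm n hn => ?_⟩
    have hpm : (1/2:ℝ)^m ≤ (1/2:ℝ)^N := pow_le_pow_of_le_one (by norm_num) (by norm_num) hm
    have hpn : (1/2:ℝ)^n ≤ (1/2:ℝ)^N := pow_le_pow_of_le_one (by norm_num) (by norm_num) hn
    calc dist (w m) (w n)
        ≤ dist (w m) (u m) + dist (u m) (u n) + dist (u n) (w n) := dist_triangle4 _ _ _ _
      _ ≤ 2 * (1/2:ℝ)^m + (1/2:ℝ)^N + 2 * (1/2:ℝ)^n := by
          refine add_le_add (add_le_add ?_ (le_of_lt (hu N m n hm hn))) ?_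
          · rw [dist_comm]; exact hdistw m
          · exact hdistw n
      _ ≤ 5 * (1/2:ℝ)^N := by nlinarith
      _ < ε := by linarith
  obtain ⟨x, hx⟩ := hinc w hwmono hwc
  refine ⟨x, ?_⟩
  rw [tendsto_iff_dist_tendsto_zero]
  have hb : ∀ n, dist (u n) x ≤ dist (u n) (w n) + dist (w n) x := fun n => dist_triangle _ _ _
  have hT : Filter.Tendsto (fun n => dist (u n) (w n) + dist (w n) x) Filter.atTop (nhds 0) := by
    have t1 : Filter.Tendsto (fun n => dist (u n) (w n)) Filter.atTop (nhds 0) := by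
      apply squeeze_zero (fun n => dist_nonneg) hdistw
      have : Filter.Tendsto (fun n : ℕ => (1/2:ℝ)^n) Filter.atTop (nhds 0) :=
        tendsto_pow_atTop_nhds_zero_of_lt_one (by norm_num) (by norm_num)
      simpa using this.const_mul 2
    have t2 : Filter.Tendsto (fun n => dist (w n) x) Filter.atTop (nhds 0) := by
      simpa using hx.dist (tendsto_const_nhds (x := x))
    simpa using t1.add t2
  exact squeeze_zero (fun n => dist_nonneg) hb hT
end

section
/- Let $(E, \leq, d)$ and $P$ be as follows: $P : E \times E \to E$ is symmetric, associative, idempotent ($P(u,u)=u$), satisfies $P(u,v) \leq u, v$, and is contractive: $d(P(v,u_0), P(v,u_1)) \leq d(u_0, u_1)$ for all $u_0, u_1, v$. Let $\{u_j\}_{j \geq 0} \subset E$ satisfy $d(u_j, u_{j+1}) \leq 2^{-j}$, and define $v^k_l = P(u_k, P(u_{k+1}, \ldots P(u_{k+l-1}, u_{k+l})\ldots))$. Then for all $k, l \geq 0$: $d(v^k_{l+1}, v^k_l) \leq 2^{-(k+l)}$. -/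
theorem stmt4 {E : Type*} [MetricSpace E] [PartialOrder E] (P : E → E → E)
    (hPle₁ : ∀ u v : E, P u v ≤ u) (hPle₂ : ∀ u v : E, P u v ≤ v)
    (hPidem : ∀ u : E, P u u = u)
    (hPsymm : ∀ u v : E, P u v = P v u)
    (hPassoc : ∀ u v w : E, P (P u v) w = P u (P v w))
    (hcontr : ∀ v u₀ u₁ : E, dist (P v u₀) (P v u₁) ≤ dist u₀ u₁)
    (u : ℕ → E) (hu : ∀ j, dist (u j) (u (j + 1)) ≤ (1 / 2 : ℝ) ^ j)
    (v : ℕ → ℕ → E)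
    (hv0 : ∀ k, v k 0 = u k)
    (hvs : ∀ k l, v k (l + 1) = P (u k) (v (k + 1) l)) :
    ∀ k l, dist (v k (l + 1)) (v k l) ≤ (1 / 2 : ℝ) ^ (k + l) := by
  intro k l
  induction l generalizing k with
  | zero =>
    rw [hvs, hv0, hv0]
    calc dist (P (u k) (u (k + 1))) (u k)
        = dist (P (u k) (u (k + 1))) (P (u k) (u k)) := by rw [hPidem]
      _ ≤ dist (u (k + 1)) (u k) := hcontr _ _ _
      _ ≤ (1 / 2 : ℝ) ^ (k + 0) := by rw [dist_comm]; simpa using hu k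
  | succ n ih =>
    rw [hvs k (n + 1), hvs k n]
    calc dist (P (u k) (v (k + 1) (n + 1))) (P (u k) (v (k + 1) n))
        ≤ dist (v (k + 1) (n + 1)) (v (k + 1) n) := hcontr _ _ _
      _ ≤ (1 / 2 : ℝ) ^ (k + 1 + n) := ih (k + 1)
      _ = (1 / 2 : ℝ) ^ (k + (n + 1)) := by ring_nf
end

section
/- In the setting of the previous estimate (with $P$ symmetric, associative, idempotent, $P(u,v) \leq u, v$, contractive, and $d(u_j, u_{j+1}) \leq 2^{-j}$), assume moreover that each decreasing sequence $\{v^k_l\}_{l}$ $d$-converges to some $v^k \in E$ as $l \to \infty$, and that $d$ is continuous under these limits in the sense $d(v^k, w) = \lim_l d(v^k_l, w)$. Then $d(v^k, u_k) \leq 2^{1-k}$ for all $k$; in particular $\{v^k\}$ and $\{u_k\}$ are equivalent Cauchy sequences. -/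
theorem stmt5 {E : Type*} [MetricSpace E] [PartialOrder E] (P : E → E → E)
    (hPle₁ : ∀ u v : E, P u v ≤ u) (hPle₂ : ∀ u v : E, P u v ≤ v)
    (hPidem : ∀ u : E, P u u = u)
    (hPsymm : ∀ u v : E, P u v = P v u)
    (hPassoc : ∀ u v w : E, P (P u v) w = P u (P v w))
    (hcontr : ∀ v u₀ u₁ : E, dist (P v u₀) (P v u₁) ≤ dist u₀ u₁)
    (u : ℕ → E) (hu : ∀ j, dist (u j) (u (j + 1)) ≤ (1 / 2 : ℝ) ^ j)
    (v : ℕ → ℕ → E)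
    (hv0 : ∀ k, v k 0 = u k)
    (hvs : ∀ k l, v k (l + 1) = P (u k) (v (k + 1) l))
    (hvdec : ∀ k, Antitone (fun l => v k l))
    (vlim : ℕ → E)
    (hconv : ∀ k, Filter.Tendsto (fun l => v k l) Filter.atTop (nhds (vlim k)))
    (hdcont : ∀ k (w : E),
      Filter.Tendsto (fun l => dist (v k l) w) Filter.atTop (nhds (dist (vlim k) w))) :
    ∀ k, dist (vlim k) (u k) ≤ 2 * (1 / 2 : ℝ) ^ k := by
  have key : ∀ l k, dist (v k l) (u k) ≤ 2 * (1 / 2 : ℝ) ^ k - 2 * (1 / 2 : ℝ) ^ (k + l) := by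
    intro l
    induction l with
    | zero => intro k; simp [hv0]
    | succ l ih =>
      intro k
      calc dist (v k (l + 1)) (u k)
          = dist (P (u k) (v (k + 1) l)) (P (u k) (u k)) := by rw [hvs, hPidem]
        _ ≤ dist (v (k + 1) l) (u k) := hcontr _ _ _
        _ ≤ dist (v (k + 1) l) (u (k + 1)) + dist (u (k + 1)) (u k) := dist_triangle _ _ _
        _ ≤ (2 * (1 / 2 : ℝ) ^ (k + 1) - 2 * (1 / 2 : ℝ) ^ (k + 1 + l)) + (1 / 2 : ℝ) ^ k := by
            gcongr
            · exact ih (k + 1)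
            · rw [dist_comm]; exact hu k
        _ = 2 * (1 / 2 : ℝ) ^ k - 2 * (1 / 2 : ℝ) ^ (k + (l + 1)) := by ring_nf
  intro k
  refine le_of_tendsto (hdcont k (u k)) ?_
  filter_upwards with l
  calc dist (v k l) (u k) ≤ 2 * (1 / 2 : ℝ) ^ k - 2 * (1 / 2 : ℝ) ^ (k + l) := key l k
    _ ≤ 2 * (1 / 2 : ℝ) ^ k := by nlinarith [pow_pos (by norm_num : (0:ℝ) < 1/2) (k + l)]
end

section
/- Let $(R, d)$ be a metric space with basepoint $0$, whose completion is $(\overline{R}, d)$, let $F : R \to \mathbb{R}$ be $d$-lower semicontinuous with largest lsc extension $F : \overline{R} \to \mathbb{R} \cup \{+\infty\}$, and let $G$ be a group acting on $R$ by $d$-isometries. Denote by $\mathcal{M}$ the set of minimizers of $F$ on $\overline{R}$ and by $d_G(Gu, Gv) = \inf_{f,g \in G} d(f.u, g.v)$ the induced pseudometric. Assume properties: (P1) any two points of $R$ are joined by a $d$-geodesic in $\overline{R}$ along which $F$ is continuous and convex; (P2) any sequence $\{u_j\} \subset \overline{R}$ with $F(u_j) \to \inf F$ and $d(0, u_j)$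 bounded has a subsequence $d$-converging to a point of $\mathcal{M}$; (P3) $\mathcal{M} \subset R$; (P5) $G$ acts transitively on $\mathcal{M}$; (P6) if $\mathcal{M} \neq \emptyset$ then for any $u, v \in R$ there exists $g \in G$ with $d_G(Gu, Gv) = d(u, g.v)$; (P7) $F(u) - F(v) = F(g.u) - F(g.v)$ for all $u, v \in R$, $g \in G$. Then the following are equivalent: (i) $\mathcal{M} \neq \emptyset$; (ii) $F$ is $G$-invariant and there exist $C, D > 0$ such that $F(u) \geq C\, d_G(G0, Gu) - D$ for all $u \in R$. -/
set_option maxHeartbeats 1000000 in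
theorem stmt7 {X : Type*} [MetricSpace X] [CompleteSpace X]
    {G : Type*} [Group G] [MulAction G X]
    (hiso : ∀ (g : G) (u v : X), dist (g • u) (g • v) = dist u v)
    (R : Set X) (hdense : Dense R) (z : X) (hz : z ∈ R)
    (hGR : ∀ (g : G), ∀ u ∈ R, g • u ∈ R)
    (F : X → EReal)
    (hreal : ∀ u ∈ R, F u ≠ ⊤ ∧ F u ≠ ⊥)
    (hlsc : LowerSemicontinuous F)
    (hext : ∀ u : X, F u = ⨆ (ε : ℝ) (_ : 0 < ε), ⨅ v ∈ {v | v ∈ R ∧ dist u v ≤ ε}, F v)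
    (M : Set X) (hM : M = {u : X | ∀ v, F u ≤ F v})
    (dG : X → X → ℝ)
    (hdG : ∀ u v : X, dG u v = ⨅ p : G × G, dist (p.1 • u) (p.2 • v))
    -- (P1) geodesics along which F is continuous and convex
    (hP1 : ∀ u ∈ R, ∀ v ∈ R, ∃ γ : ℝ → X, γ 0 = u ∧ γ 1 = v ∧
      (∀ s ∈ Set.Icc (0:ℝ) 1, ∀ t ∈ Set.Icc (0:ℝ) 1,
        dist (γ s) (γ t) = |s - t| * dist u v) ∧
      ∃ f : ℝ → ℝ, ContinuousOn f (Set.Icc 0 1) ∧ ConvexOn ℝ (Set.Icc 0 1) f ∧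
        ∀ t ∈ Set.Icc (0:ℝ) 1, F (γ t) = (f t : EReal))
    -- (P2) compactness of bounded minimizing sequences
    (hP2 : ∀ (u : ℕ → X) (C : ℝ), (∀ j, dist z (u j) ≤ C) →
      Filter.Tendsto (fun j => F (u j)) Filter.atTop (nhds (⨅ v, F v)) →
      ∃ m ∈ M, ∃ φ : ℕ → ℕ, StrictMono φ ∧
        Filter.Tendsto (fun j => u (φ j)) Filter.atTop (nhds m))
    -- (P3) minimizers are regular
    (hP3 : M ⊆ R)
    -- (P5) G acts transitively on M
    (hP5 : ∀ u ∈ M, ∀ v ∈ M, ∃ g : G, g • u = v)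
    -- (P6) the orbit distance is attained
    (hP6 : M.Nonempty → ∀ u ∈ R, ∀ v ∈ R, ∃ g : G, dG u v = dist u (g • v))
    -- (P7) cocycle property of F under the G-action
    (hP7 : ∀ u ∈ R, ∀ v ∈ R, ∀ g : G, F (g • u) + F v = F u + F (g • v)) :
    M.Nonempty ↔
      ((∀ u ∈ R, ∀ g : G, F (g • u) = F u) ∧
        ∃ C D : ℝ, 0 < C ∧ 0 < D ∧
          ∀ u ∈ R, (↑(C * dG z u - D) : EReal) ≤ F u) := by
  classical
  have hbdd : ∀ x y : X, BddBelow (Set.range fun p : G × G => dist (p.1 • x) (p.2 • y)) :=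
    fun x y => ⟨0, by rintro _ ⟨p, rfl⟩; exact dist_nonneg⟩
  have hdG_le : ∀ (x y : X) (p : G × G), dG x y ≤ dist (p.1 • x) (p.2 • y) := by
    intro x y p; rw [hdG]; exact ciInf_le (hbdd x y) p
  have hdG_nonneg : ∀ x y : X, 0 ≤ dG x y := by
    intro x y; rw [hdG]; exact le_ciInf fun p => dist_nonneg
  have hlow_all : ∀ c : ℝ, (∀ u ∈ R, (c : EReal) ≤ F u) → ∀ u : X, (c : EReal) ≤ F u := by
    intro c hc u
    rw [hext u]
    refine le_trans ?_
      (le_iSup₂ (f := fun (ε : ℝ) (_ : 0 < ε) => ⨅ v ∈ {v | v ∈ R ∧ dist u v ≤ ε}, F v)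
        1 one_pos)
    exact le_iInf₂ fun v hv => hc v hv.1
  constructor
  · rintro ⟨m, hm⟩
    have hmR : m ∈ R := hP3 hm
    have hmin : ∀ v, F m ≤ F v := by rw [hM] at hm; exact hm
    set a : ℝ := (F m).toReal with ha
    have hFm : F m = (a : EReal) := (EReal.coe_toReal (hreal m hmR).1 (hreal m hmR).2).symm
    -- invariance on the orbit of m
    have hMg : ∀ g : G, F (g • m) = F m := by
      intro g
      have h7 := hP7 (g⁻¹ • m) (hGR g⁻¹ m hmR) m hmR g
      rw [smul_inv_smul] at h7
      have h1 : F m ≤ F (g⁻¹ • m) := hmin _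
      have h2 : F m ≤ F (g • m) := hmin _
      have hR1 := hGR g⁻¹ m hmR
      have hR2 := hGR g m hmR
      have e1 : F (g⁻¹ • m) = (((F (g⁻¹ • m)).toReal : ℝ) : EReal) :=
        (EReal.coe_toReal (hreal _ hR1).1 (hreal _ hR1).2).symm
      have e2 : F (g • m) = (((F (g • m)).toReal : ℝ) : EReal) :=
        (EReal.coe_toReal (hreal _ hR2).1 (hreal _ hR2).2).symm
      rw [hFm, e1, e2, ← EReal.coe_add, ← EReal.coe_add, EReal.coe_eq_coe_iff] at h7
      rw [hFm, e1, EReal.coe_le_coe_iff] at h1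
      rw [hFm, e2, EReal.coe_le_coe_iff] at h2
      rw [e2, hFm, EReal.coe_eq_coe_iff]
      linarith
    have hinv : ∀ u ∈ R, ∀ g : G, F (g • u) = F u := by
      intro u huR g
      have h7 := hP7 u huR m hmR g
      rw [hMg g] at h7
      have hR1 := hGR g u huR
      have e1 : F (g • u) = (((F (g • u)).toReal : ℝ) : EReal) :=
        (EReal.coe_toReal (hreal _ hR1).1 (hreal _ hR1).2).symm
      have e2 : F u = (((F u).toReal : ℝ) : EReal) :=
        (EReal.coe_toReal (hreal _ huR).1 (hreal _ huR).2).symm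
      rw [hFm, e1, e2, ← EReal.coe_add, ← EReal.coe_add, EReal.coe_eq_coe_iff] at h7
      rw [e1, e2, EReal.coe_eq_coe_iff]
      linarith
    refine ⟨hinv, ?_⟩
    by_contra hcon
    push_neg at hcon
    set K := dist z m with hK
    have hKnn : 0 ≤ K := dist_nonneg
    have hdG_tri : ∀ u : X, dG z u ≤ dG m u + K := by
      intro u
      have hall : ∀ p : G × G, dG z u - K ≤ dist (p.1 • m) (p.2 • u) := by
        intro p
        have h1 : dG z u ≤ dist (p.1 • z) (p.2 • u) := hdG_le z u p
        have h2 : dist (p.1 • z) (p.2 • u) ≤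
            dist (p.1 • z) (p.1 • m) + dist (p.1 • m) (p.2 • u) := dist_triangle _ _ _
        rw [hiso] at h2
        linarith
      have h3 : dG z u - K ≤ dG m u := by rw [hdG m u]; exact le_ciInf hall
      linarith
    have hinf : (⨅ v, F v) = (a : EReal) := by
      refine le_antisymm (le_trans (iInf_le _ m) hFm.le) (le_iInf fun v => ?_)
      rw [← hFm]; exact hmin v
    have key : ∀ j : ℕ, ∃ v : X, dist z v ≤ K + 1 ∧ ∃ r : ℝ, F v = (r : EReal) ∧
        a ≤ r ∧ r ≤ a + (1 + K) / ((j : ℝ) + 1) ∧ ∀ m' ∈ M, 1 ≤ dist m' v := by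
      intro j
      have hj0 : (0:ℝ) ≤ (j : ℝ) := Nat.cast_nonneg j
      have hj1 : (0:ℝ) < 1 / ((j : ℝ) + 1) := by positivity
      have hj2 : (0:ℝ) < (j : ℝ) + 1 + |a| + K := by positivity
      obtain ⟨u, huR, hu⟩ := hcon (1 / ((j : ℝ) + 1)) ((j : ℝ) + 1 + |a| + K) hj1 hj2
      set bu := (F u).toReal with hbu
      have hFu : F u = (bu : EReal) := (EReal.coe_toReal (hreal u huR).1 (hreal u huR).2).symm
      have hab : a ≤ bu := by
        have h := hmin u; rw [hFm, hFu, EReal.coe_le_coe_iff] at h; exact h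
      have hlt : bu < 1 / ((j : ℝ) + 1) * dG z u - ((j : ℝ) + 1 + |a| + K) := by
        rw [hFu, EReal.coe_lt_coe_iff] at hu; exact hu
      set e := dG z u with he
      have habs : -|a| ≤ a := neg_abs_le a
      have hcbig : (j : ℝ) + 1 + K < 1 / ((j : ℝ) + 1) * e := by linarith
      have hc0 : (0:ℝ) ≤ 1 / ((j : ℝ) + 1) * e := by linarith
      have heq : e = ((j : ℝ) + 1) * (1 / ((j : ℝ) + 1) * e) := by
        field_simp
      have hepos : (j : ℝ) + 1 + K < e := by
        nlinarith [mul_nonneg hj0 hc0]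
      obtain ⟨g, hg⟩ := hP6 ⟨m, hm⟩ m hmR u huR
      set u' := g • u with hu'
      have hu'R : u' ∈ R := hGR g u huR
      have hFu' : F u' = (bu : EReal) := by rw [hu', hinv u huR g, hFu]
      set dd := dist m u' with hdd
      have hdde : dd = dG m u := hg.symm
      have hddge : e - K ≤ dd := by
        have h := hdG_tri u
        rw [← hdde, ← he] at h
        linarith
      have hdd1 : 1 ≤ dd := by linarith
      have hddpos : 0 < dd := lt_of_lt_of_le one_pos hdd1
      obtain ⟨γ, hγ0, hγ1, hgeo, f, hfc, hfcv, hFf⟩ := hP1 m hmR u' hu'R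
      set t := dd⁻¹ with htdef
      have ht0 : 0 < t := inv_pos.mpr hddpos
      have htdd : t * dd = 1 := inv_mul_cancel₀ hddpos.ne'
      have ht1 : t ≤ 1 := by nlinarith
      have htmem : t ∈ Set.Icc (0:ℝ) 1 := ⟨ht0.le, ht1⟩
      have h0mem : (0:ℝ) ∈ Set.Icc (0:ℝ) 1 := ⟨le_refl _, zero_le_one⟩
      have h1mem : (1:ℝ) ∈ Set.Icc (0:ℝ) 1 := ⟨zero_le_one, le_refl _⟩
      set v := γ t with hv
      have hdmv : dist m v = 1 := by
        have h := hgeo 0 h0mem t htmem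
        rw [hγ0, ← hdd] at h
        rw [hv, h, zero_sub, abs_neg, abs_of_pos ht0]
        exact htdd
      have hdvu : dist v u' = dd - 1 := by
        have h := hgeo t htmem 1 h1mem
        rw [hγ1, ← hdd] at h
        rw [hv, h, abs_of_nonpos (by linarith : t - 1 ≤ 0)]
        linear_combination -htdd
      have hdzv : dist z v ≤ K + 1 := by
        calc dist z v ≤ dist z m + dist m v := dist_triangle _ _ _
        _ = K + 1 := by rw [hdmv, ← hK]
      have hf0 : f 0 = a := by
        have h := hFf 0 h0mem
        rw [hγ0, hFm] at h
        exact (EReal.coe_eq_coe_iff.mp h).symm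
      have hf1 : f 1 = bu := by
        have h := hFf 1 h1mem
        rw [hγ1, hFu'] at h
        exact (EReal.coe_eq_coe_iff.mp h).symm
      have hFv : F v = ((f t : ℝ) : EReal) := hFf t htmem
      set r := f t with hr
      have hra : a ≤ r := by
        have h := hmin v
        rw [hFm, hFv, EReal.coe_le_coe_iff] at h
        exact h
      have hcvx := hfcv.2 h0mem h1mem (by linarith : (0:ℝ) ≤ 1 - t) ht0.le (by ring)
      simp only [smul_eq_mul, mul_zero, mul_one, zero_add] at hcvx
      rw [hf0, hf1] at hcvx
      have hba2 : bu - a ≤ 1 / ((j : ℝ) + 1) * e := by linarith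
      have heK : e ≤ dd + K := by
        have h := hdG_tri u
        rw [← hdde, ← he] at h
        exact h
      have hE : e ≤ (1 + K) * dd := by nlinarith [mul_le_mul_of_nonneg_left hdd1 hKnn]
      have h1 : bu - a ≤ 1 / ((j : ℝ) + 1) * ((1 + K) * dd) :=
        le_trans hba2 (mul_le_mul_of_nonneg_left hE hj1.le)
      have h2 : t * (bu - a) ≤ (1 + K) / ((j : ℝ) + 1) := by
        rw [htdef, inv_mul_le_iff₀ hddpos]
        calc bu - a ≤ 1 / ((j : ℝ) + 1) * ((1 + K) * dd) := h1
        _ = dd * ((1 + K) / ((j : ℝ) + 1)) := by ring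
      rw [← hr] at hcvx
      have key_bound : r ≤ a + (1 + K) / ((j : ℝ) + 1) := by
        have hhh : (1 - t) * a + t * bu = a + t * (bu - a) := by ring
        linarith
      refine ⟨v, hdzv, r, hFv, hra, key_bound, ?_⟩
      intro m' hm'
      obtain ⟨h, hh⟩ := hP5 m hm m' hm'
      have h1' : dG m u ≤ dist (h • m) (g • u) := hdG_le m u (h, g)
      rw [hh, ← hu', ← hdde] at h1'
      have h2' : dist m' u' ≤ dist m' v + dist v u' := dist_triangle _ _ _
      rw [hdvu] at h2'
      linarith
    choose v hvz rfun hFr hral hrup hfar using key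
    have hr : Filter.Tendsto rfun Filter.atTop (nhds a) := by
      have h0 : Filter.Tendsto (fun j : ℕ => (1 + K) / ((j : ℝ) + 1)) Filter.atTop (nhds 0) :=
        Filter.Tendsto.div_atTop tendsto_const_nhds
          (Filter.tendsto_atTop_add_const_right _ 1 tendsto_natCast_atTop_atTop)
      have hup : Filter.Tendsto (fun j : ℕ => a + (1 + K) / ((j : ℝ) + 1))
          Filter.atTop (nhds a) := by
        simpa using (tendsto_const_nhds (x := a) (f := Filter.atTop (α := ℕ))).add h0
      exact tendsto_of_tendsto_of_tendsto_of_le_of_le tendsto_const_nhds hup hral hrup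
    have htend : Filter.Tendsto (fun j => F (v j)) Filter.atTop (nhds (⨅ w, F w)) := by
      rw [hinf]
      have heq : (fun j => F (v j)) = fun j => ((rfun j : ℝ) : EReal) := funext hFr
      rw [heq]
      exact EReal.tendsto_coe.mpr hr
    obtain ⟨m', hm'M, φ, hφ, hconv⟩ := hP2 v (K + 1) hvz htend
    obtain ⟨N, hN⟩ := (Metric.tendsto_atTop.mp hconv) 1 one_pos
    have h2 := hN N (le_refl N)
    have h3 := hfar (φ N) m' hm'M
    rw [dist_comm] at h3
    linarith
  · rintro ⟨hinv, C, D, hC, hD, hcoer⟩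
    set α := ⨅ w, F w with hα
    have hlowR : ∀ u ∈ R, ((-D : ℝ) : EReal) ≤ F u := by
      intro u hu
      refine le_trans ?_ (hcoer u hu)
      rw [EReal.coe_le_coe_iff]
      nlinarith [hdG_nonneg z u, hC.le]
    have hlow : ∀ u, ((-D : ℝ) : EReal) ≤ F u := hlow_all (-D) hlowR
    have hαbot : α ≠ ⊥ := fun h => EReal.coe_ne_bot (-D) (le_bot_iff.mp (h ▸ le_iInf hlow))
    have hαtop : α ≠ ⊤ := by
      have h1 : α ≤ F z := iInf_le _ z
      exact ne_top_of_le_ne_top (hreal z hz).1 h1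
    set a := α.toReal with ha
    have hαa : α = (a : EReal) := (EReal.coe_toReal hαtop hαbot).symm
    have key : ∀ j : ℕ, ∃ w ∈ R, dist z w ≤ (a + 1 + D) / C + 1 ∧
        ∃ r : ℝ, F w = (r : EReal) ∧ a ≤ r ∧ r ≤ a + 1 / ((j : ℝ) + 1) := by
      intro j
      have hj0 : (0:ℝ) ≤ (j : ℝ) := Nat.cast_nonneg j
      have hj1 : (0:ℝ) < 1 / ((j : ℝ) + 1) := by positivity
      have hj2 : 1 / ((j : ℝ) + 1) ≤ 1 := by
        rw [div_le_one (by positivity)]; linarith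
      have hu : ∃ u ∈ R, F u < ((a + 1 / ((j : ℝ) + 1) : ℝ) : EReal) := by
        by_contra hno
        push_neg at hno
        have hall : ∀ u, ((a + 1 / ((j : ℝ) + 1) : ℝ) : EReal) ≤ F u := hlow_all _ hno
        have h1 : ((a + 1 / ((j : ℝ) + 1) : ℝ) : EReal) ≤ α := le_iInf hall
        rw [hαa, EReal.coe_le_coe_iff] at h1
        linarith
      obtain ⟨u, huR, huF⟩ := hu
      set b := (F u).toReal with hb
      have hFu : F u = (b : EReal) := (EReal.coe_toReal (hreal u huR).1 (hreal u huR).2).symm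
      have hblt : b < a + 1 / ((j : ℝ) + 1) := by
        rw [hFu, EReal.coe_lt_coe_iff] at huF; exact huF
      have hble : a ≤ b := by
        have h1 : α ≤ F u := iInf_le _ u
        rw [hαa, hFu, EReal.coe_le_coe_iff] at h1
        exact h1
      have hcu := hcoer u huR
      rw [hFu, EReal.coe_le_coe_iff] at hcu
      have hdGb : dG z u ≤ (a + 1 + D) / C := by
        rw [le_div_iff₀ hC]
        nlinarith
      have hlt2 : dG z u < (a + 1 + D) / C + 1 := by linarith
      rw [hdG] at hlt2
      obtain ⟨p, hp⟩ := exists_lt_of_ciInf_lt hlt2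
      set g := p.1⁻¹ * p.2 with hgdef
      have hdzw : dist z (g • u) < (a + 1 + D) / C + 1 := by
        have h1 : dist z (g • u) = dist (p.1 • z) (p.1 • (g • u)) := (hiso p.1 z (g • u)).symm
        rw [h1, ← mul_smul, hgdef, mul_inv_cancel_left]
        exact hp
      refine ⟨g • u, hGR g u huR, hdzw.le, b, ?_, hble, hblt.le⟩
      rw [hinv u huR g, hFu]
    choose w hwR hwz rfun hFr hral hrup using key
    have hr : Filter.Tendsto rfun Filter.atTop (nhds a) := by
      have h0 : Filter.Tendsto (fun j : ℕ => (1:ℝ) / ((j : ℝ) + 1)) Filter.atTop (nhds 0) :=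
        Filter.Tendsto.div_atTop tendsto_const_nhds
          (Filter.tendsto_atTop_add_const_right _ 1 tendsto_natCast_atTop_atTop)
      have hup : Filter.Tendsto (fun j : ℕ => a + 1 / ((j : ℝ) + 1))
          Filter.atTop (nhds a) := by
        simpa using (tendsto_const_nhds (x := a) (f := Filter.atTop (α := ℕ))).add h0
      exact tendsto_of_tendsto_of_tendsto_of_le_of_le tendsto_const_nhds hup hral hrup
    have htend : Filter.Tendsto (fun j => F (w j)) Filter.atTop (nhds α) := by
      rw [hαa]
      have heq : (fun j => F (w j)) = fun j => ((rfun j : ℝ) : EReal) := funext hFr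
      rw [heq]
      exact EReal.tendsto_coe.mpr hr
    obtain ⟨m, hmM, -⟩ := hP2 w ((a + 1 + D) / C + 1) hwz htend
    exact ⟨m, hmM⟩
end

section
/- Let $(\overline{R}, d)$ be a metric space and $F : \overline{R} \to \mathbb{R} \cup \{+\infty\}$ with minimizer set $\mathcal{M} \neq \emptyset$ and $m = \inf F$. Assume: (a) for every $u \in \overline{R}$ with $F(u) < \infty$ and every $u_0 \in \mathcal{M}$ there is a constant speed $d$-geodesic $t \mapsto u_t$, $t \in [0,1]$, from $u_0$ to $u$ along which $F$ is convex and continuous; (b) there exist $\varepsilon > 0$ and $\delta > 0$ such that $F(v) \geq m + \delta$ whenever $d(v, \mathcal{M}) \geq \varepsilon$ (where $d(v, \mathcal{M}) = \inf_{w \in \mathcal{M}} d(v, w)$). Then $F(u) \geq m + \frac{\delta}{2\varepsilon}\, d(u, \mathcal{M}) - \delta$ for all $u \in \overline{R}$. -/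
theorem stmt12 {X : Type*} [MetricSpace X] (F : X → EReal) (m : ℝ)
    (M : Set X) (hM : M = {u : X | ∀ v, F u ≤ F v}) (hMne : M.Nonempty)
    (hm : ∀ u₀ ∈ M, F u₀ = (m : EReal))
    (hgeo : ∀ u : X, F u ≠ ⊤ → ∀ u₀ ∈ M, ∃ γ : ℝ → X, γ 0 = u₀ ∧ γ 1 = u ∧
      (∀ s ∈ Set.Icc (0:ℝ) 1, ∀ t ∈ Set.Icc (0:ℝ) 1,
        dist (γ s) (γ t) = |s - t| * dist u₀ u) ∧
      ∃ f : ℝ → ℝ, ContinuousOn f (Set.Icc 0 1) ∧ ConvexOn ℝ (Set.Icc 0 1) f ∧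
        ∀ t ∈ Set.Icc (0:ℝ) 1, F (γ t) = (f t : EReal))
    (ε δ : ℝ) (hε : 0 < ε) (hδ : 0 < δ)
    (hgap : ∀ v : X, ε ≤ Metric.infDist v M → (↑(m + δ) : EReal) ≤ F v) :
    ∀ u : X, (↑(m + δ / (2 * ε) * Metric.infDist u M - δ) : EReal) ≤ F u := by
  intro u
  obtain ⟨w, hw⟩ := hMne
  have hw' : ∀ v, F w ≤ F v := by rw [hM] at hw; exact hw
  have hlow : ∀ v, (m : EReal) ≤ F v := fun v => (hm w hw) ▸ hw' v
  set D := Metric.infDist u M with hDdef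
  have hD0 : 0 ≤ D := Metric.infDist_nonneg
  by_cases hcase : D ≤ 2 * ε
  · refine le_trans ?_ (hlow u)
    have : m + δ / (2 * ε) * D - δ ≤ m := by
      have h1 : δ / (2 * ε) * D ≤ δ := by
        have := div_le_one_of_le₀ hcase (by positivity : (0:ℝ) ≤ 2 * ε)
        calc δ / (2 * ε) * D = δ * (D / (2 * ε)) := by ring
          _ ≤ δ * 1 := by apply mul_le_mul_of_nonneg_left _ hδ.le; linarith [this]
          _ = δ := by ring
      linarith
    exact_mod_cast this
  push_neg at hcase
  by_cases hu : F u = ⊤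
  · rw [hu]; exact le_top
  -- pick near-minimizer
  have hD : D < D + ε := by linarith
  obtain ⟨u₀, hu₀M, hu₀d⟩ := (Metric.infDist_lt_iff ⟨w, hw⟩).1 hD
  set d := dist u₀ u with hddef
  have hdd : dist u u₀ = d := dist_comm u u₀
  have hdlt : d < D + ε := by rw [← hdd]; exact hu₀d
  have hDd : D ≤ d := by rw [← hdd]; exact Metric.infDist_le_dist_of_mem hu₀M
  have hdpos : 0 < d := by linarith
  obtain ⟨γ, hγ0, hγ1, hspeed, f, hfc, hfconv, hFf⟩ := hgeo u hu u₀ hu₀M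
  set t := (d - D + ε) / d with htdef
  have ht0 : 0 < t := by apply div_pos _ hdpos; linarith
  have ht1 : t ≤ 1 := by rw [div_le_one hdpos]; linarith
  have htmem : t ∈ Set.Icc (0:ℝ) 1 := ⟨ht0.le, ht1⟩
  have h0mem : (0:ℝ) ∈ Set.Icc (0:ℝ) 1 := by constructor <;> norm_num
  have h1mem : (1:ℝ) ∈ Set.Icc (0:ℝ) 1 := by constructor <;> norm_num
  -- f 0 = m
  have hf0 : f 0 = m := by
    have h1 : F (γ 0) = (f 0 : EReal) := hFf 0 h0mem
    rw [hγ0, hm u₀ hu₀M] at h1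
    exact_mod_cast h1.symm
  -- F u = f 1
  have hf1 : F u = (f 1 : EReal) := by rw [← hγ1]; exact hFf 1 h1mem
  -- the geodesic point at t is ε-far from M
  have hdist : dist u (γ t) = D - ε := by
    have := hspeed 1 h1mem t htmem
    rw [hγ1] at this
    rw [this, ← hddef, htdef]
    rw [abs_of_nonneg (by rw [sub_nonneg, div_le_one hdpos]; linarith)]
    field_simp
    ring
  have hfar : ε ≤ Metric.infDist (γ t) M := by
    have h := Metric.infDist_le_infDist_add_dist (x := u) (y := γ t) (s := M)
    rw [hdist] at h
    linarith [h]
  have hft : m + δ ≤ f t := by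
    have h := hgap (γ t) hfar
    rw [hFf t htmem] at h
    exact_mod_cast h
  -- convexity
  have hconv := hfconv.2 h0mem h1mem (by linarith : (0:ℝ) ≤ 1 - t) ht0.le (by ring)
  simp only [smul_eq_mul, mul_zero, mul_one, zero_add, add_zero] at hconv
  rw [hf0] at hconv
  -- combine: m + δ ≤ f t ≤ (1-t) m + t f 1
  have key : m + δ / (2 * ε) * D - δ ≤ f 1 := by
    have h1 : m + δ ≤ (1 - t) * m + t * f 1 := le_trans hft hconv
    have h2 : δ ≤ t * (f 1 - m) := by nlinarith
    have htval : t * d = d - D + ε := by rw [htdef]; field_simp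
    have h3 : δ * d ≤ (d - D + ε) * (f 1 - m) := by nlinarith
    -- d - D + ε < 2ε, D ≤ d
    have h4 : 0 < d - D + ε := by linarith
    have h5 : f 1 - m ≥ δ * d / (d - D + ε) := by
      rw [ge_iff_le, div_le_iff₀ h4]; linarith
    have h6 : δ * D / (2 * ε) ≤ δ * d / (d - D + ε) := by
      rw [div_le_div_iff₀ (by linarith) h4]
      nlinarith [mul_lt_mul_of_pos_left (show d - D + ε < 2*ε by linarith)
          (mul_pos hδ (show (0:ℝ) < D by linarith)),
        mul_le_mul_of_nonneg_left hDd (by positivity : (0:ℝ) ≤ δ * (2*ε))]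
    have h7 : δ / (2 * ε) * D = δ * D / (2 * ε) := by ring
    linarith
  rw [hf1]
  exact_mod_cast key
end

section
/- Let $(M, d)$ be a complete metric space, $H \subset M$, $G$ a group acting on $M$ by $d$-isometries preserving $H$, and $F : M \to \mathbb{R} \cup \{+\infty\}$ a function satisfying $F(u) - F(v) = F(g.u) - F(g.v)$ for all $u, v \in M$ with finite $F$-values and all $g \in G$. If there exist $C, B > 0$ such that $F(u) \geq C\, d_G(G0, Gu) - B$ for all $u \in H$, where $d_G(Gu, Gv) = \inf_{g \in G} d(u, g.v)$ and $0 \in H$, then $F$ is $G$-invariant on $H$: $F(g.u) = F(u)$ for all $u \in H$, $g \in G$ (assuming $F$ is finite on $H$). -/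
theorem stmt15 {M : Type*} [MetricSpace M] [CompleteSpace M]
    {G : Type*} [Group G] [MulAction G M]
    (hiso : ∀ (g : G) (u v : M), dist (g • u) (g • v) = dist u v)
    (H : Set M) (hHG : ∀ (g : G), ∀ u ∈ H, g • u ∈ H)
    (z : M) (hz : z ∈ H)
    (F : M → EReal)
    (hcocycle : ∀ (g : G) (u v : M), F u ≠ ⊤ → F u ≠ ⊥ → F v ≠ ⊤ → F v ≠ ⊥ →
      F u - F v = F (g • u) - F (g • v))
    (hfin : ∀ u ∈ H, ∃ r : ℝ, F u = (r : EReal))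
    (dG : M → M → ℝ) (hdG : ∀ u v : M, dG u v = ⨅ g : G, dist u (g • v))
    (C B : ℝ) (hC : 0 < C) (hB : 0 < B)
    (hprop : ∀ u ∈ H, (↑(C * dG z u - B) : EReal) ≤ F u) :
    ∀ u ∈ H, ∀ g : G, F (g • u) = F u := by
  -- dG is invariant under the action on the second argument
  have hdGinv : ∀ (u : M) (g : G), dG z (g • u) = dG z u := by
    intro u g
    rw [hdG, hdG]
    have hrange : Set.range (fun k : G => dist z (k • (g • u)))
        = Set.range (fun k : G => dist z (k • u)) := by
      ext x
      constructor
      · rintro ⟨k, rfl⟩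
        exact ⟨k * g, by simp [mul_smul]⟩
      · rintro ⟨k, rfl⟩
        exact ⟨k * g⁻¹, by simp [mul_smul]⟩
    show sInf _ = sInf _
    rw [hrange]
  -- key: F u ≤ F (g • u) for all u ∈ H, g
  have key : ∀ u ∈ H, ∀ g : G, F u ≤ F (g • u) := by
    intro u hu g
    obtain ⟨r, hr⟩ := hfin u hu
    obtain ⟨s, hs⟩ := hfin (g • u) (hHG g u hu)
    rw [hr, hs, EReal.coe_le_coe_iff]
    by_contra hlt
    push_neg at hlt
    set δ : ℝ := s - r with hδ
    have hδneg : δ < 0 := by simp [hδ]; linarith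
    -- F (g^n • u) = r + n * δ
    have horb : ∀ n : ℕ, F ((g ^ n) • u) = ((r + n * δ : ℝ) : EReal) := by
      intro n
      induction n with
      | zero => simpa using hr
      | succ n ih =>
        have hc := hcocycle (g ^ n) (g • u) u (by rw [hs]; exact EReal.coe_ne_top s)
          (by rw [hs]; exact EReal.coe_ne_bot s) (by rw [hr]; exact EReal.coe_ne_top r)
          (by rw [hr]; exact EReal.coe_ne_bot r)
        rw [hs, hr, ih] at hc
        have hsm : (g ^ n) • (g • u) = (g ^ (n + 1)) • u := by
          rw [← mul_smul, ← pow_succ]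
        rw [hsm] at hc
        obtain ⟨t, ht⟩ := hfin ((g ^ (n + 1)) • u) (hHG _ u hu)
        rw [ht] at hc ⊢
        rw [← EReal.coe_sub, ← EReal.coe_sub, EReal.coe_eq_coe_iff] at hc
        have : t = r + (n + 1) * δ := by
          have := hc
          push_cast
          linarith
        rw [this]
        push_cast
        ring_nf
    -- contradiction with properness
    obtain ⟨n, hn⟩ := exists_nat_gt ((r - (C * dG z u - B)) / (-δ))
    have hmem : (g ^ n) • u ∈ H := hHG _ u hu
    have hp := hprop _ hmem
    rw [horb n, hdGinv u (g ^ n), EReal.coe_le_coe_iff] at hp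
    have hnδ : (n : ℝ) * δ < -(r - (C * dG z u - B)) := by
      have h1 : (r - (C * dG z u - B)) < n * (-δ) := by
        rw [div_lt_iff₀ (by linarith : (0:ℝ) < -δ)] at hn
        linarith [hn]
      nlinarith
    linarith
  intro u hu g
  have h1 := key u hu g
  have h2 := key (g • u) (hHG g u hu) g⁻¹
  rw [inv_smul_smul] at h2
  exact le_antisymm h2 h1
end
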